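/- Let f be a piecewise contracting interval map with D ⊂ X̃, and let x ∈ X̃ with a periodic point p ∈ X̃ of f. If p ∈ ω(x), then ω(x) = O(p), the orbit of p. -/
import Mathlib


open Filter Topology Set

/-- A piecewise contracting interval map on `X = [c 0, c N]` with contraction pieces
`X_i` delimited by the points `c 0 < c 1 < … < c N`, contraction rate `lam ∈ (0,1)`,
and `fe i` the (unique) continuous `lam`-Lipschitz extension of `f` restricted to the
`i`-th piece to its closure `[c (i-1), c i]`. The pieces are
`X_1 = [c 0, c 1)`, `X_i = (c (i-1), c i)` for `1 < i < N`, `X_N = (c (N-1), c N]`. -/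
structure PCIM where
  N : ℕ
  hN : 2 ≤ N
  c : ℕ → ℝ
  lam : ℝ
  f : ℝ → ℝ
  fe : ℕ → ℝ → ℝ
  hc : StrictMonoOn c (Set.Iic N)
  hlam : lam ∈ Set.Ioo (0 : ℝ) 1
  hmap : Set.MapsTo f (Set.Icc (c 0) (c N)) (Set.Icc (c 0) (c N))
  hfe_lip : ∀ i, 1 ≤ i → i ≤ N →
    ∀ x ∈ Set.Icc (c (i - 1)) (c i), ∀ y ∈ Set.Icc (c (i - 1)) (c i),
      |fe i x - fe i y| ≤ lam * |x - y|
  hfe_eq : ∀ i, 1 ≤ i → i ≤ N → ∀ x ∈ Set.Ioo (c (i - 1)) (c i), fe i x = f x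
  hfe_left : fe 1 (c 0) = f (c 0)
  hfe_right : fe N (c N) = f (c N)

namespace PCIM

variable (P : PCIM)

/-- The phase space `X = [c 0, c N]`. -/
def X : Set ℝ := Set.Icc (P.c 0) (P.c P.N)

/-- The `i`-th contraction piece (`1 ≤ i ≤ N`). -/
def piece (i : ℕ) : Set ℝ :=
  Set.Ioo (P.c (i - 1)) (P.c i)
    ∪ (if i = 1 then {P.c 0} else (∅ : Set ℝ))
    ∪ (if i = P.N then {P.c P.N} else (∅ : Set ℝ))

/-- `Δ`, the set of interior boundary points of the pieces. -/
def Δ : Set ℝ := {y | ∃ i, 1 ≤ i ∧ i < P.N ∧ y = P.c i}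

/-- `X̃ = ⋂ n, f⁻ⁿ(X \ Δ)`: points whose whole forward orbit stays in `X` and avoids `Δ`. -/
def Xt : Set ℝ := {x | ∀ n : ℕ, P.f^[n] x ∈ P.X \ P.Δ}

/-- Forward orbit of `x`. -/
def orbit (x : ℝ) : Set ℝ := Set.range fun n : ℕ => P.f^[n] x

/-- The ω-limit set of `x`: limits of subsequences of the forward orbit. -/
def omega (x : ℝ) : Set ℝ :=
  {y | ∃ φ : ℕ → ℕ, StrictMono φ ∧
    Filter.Tendsto (fun n => P.f^[φ n] x) Filter.atTop (nhds y)}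

/-- `d_i^- = f_i (c_i)`, the left lateral limit of `f` at `c i`. -/
def dminus (i : ℕ) : ℝ := P.fe i (P.c i)

/-- `d_i^+ = f_{i+1} (c_i)`, the right lateral limit of `f` at `c i`. -/
def dplus (i : ℕ) : ℝ := P.fe (i + 1) (P.c i)

/-- `D⁻ = {d_1^-, …, d_{N-1}^-}`. -/
def Dminus : Set ℝ := {y | ∃ i, 1 ≤ i ∧ i < P.N ∧ y = P.dminus i}

/-- `D⁺ = {d_1^+, …, d_{N-1}^+}`. -/
def Dplus : Set ℝ := {y | ∃ i, 1 ≤ i ∧ i < P.N ∧ y = P.dplus i}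

/-- `D`, the set of all one-sided limits of `f` at endpoints of the pieces. -/
def D : Set ℝ := P.Dminus ∪ P.Dplus ∪ {P.fe 1 (P.c 0), P.fe P.N (P.c P.N)}

/-- `A` is pseudo-invariant: for every `x ∈ A` at least one one-sided limit of `f`
at `x` (i.e. some `fe i x` with `x` in the closure of the `i`-th piece) belongs to `A`. -/
def PseudoInvariant (A : Set ℝ) : Prop :=
  ∀ x ∈ A, ∃ i, 1 ≤ i ∧ i ≤ P.N ∧ x ∈ Set.Icc (P.c (i - 1)) (P.c i) ∧ P.fe i x ∈ A

/-- `F_i(A) = closure (f (A ∩ X_i))`. -/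
def Fmap (i : ℕ) (A : Set ℝ) : Set ℝ := closure (P.f '' (A ∩ P.piece i))

/-- For a word `w = [i_1, …, i_n]`, the set `F_{i_n} ∘ … ∘ F_{i_1} (X)`. -/
def atomOf (w : List ℕ) : Set ℝ := w.foldl (fun S i => P.Fmap i S) P.X

/-- `A` is an atom of generation `n`. -/
def IsAtomGen (n : ℕ) (A : Set ℝ) : Prop :=
  ∃ w : List ℕ, w.length = n ∧ (∀ i ∈ w, 1 ≤ i ∧ i ≤ P.N) ∧
    A = P.atomOf w ∧ A.Nonempty

/-- `Lam n` is `Λ_{n+1}` of the paper: `Λ_1 = closure (f(X \ Δ))`,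
`Λ_{n+1} = closure (f(Λ_n \ Δ))`. -/
def Lam (P : PCIM) : ℕ → Set ℝ
  | 0 => closure (P.f '' (P.X \ P.Δ))
  | n + 1 => closure (P.f '' (P.Lam n \ P.Δ))

/-- The attractor `Λ = ⋂_{n ≥ 1} Λ_n`. -/
def attractor : Set ℝ := ⋂ n : ℕ, P.Lam n

/-- `c i ∈ Δ_lr(x)`: the boundary point `c i` is left-right recurrently visited by the
orbit of `x`. -/
def lrVisited (x : ℝ) (i : ℕ) : Prop :=
  1 ≤ i ∧ i < P.N ∧
  ∃ l r : ℕ → ℕ, StrictMono l ∧ StrictMono r ∧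
    (∀ j, P.f^[l j] x ∈ P.piece i) ∧ (∀ j, P.f^[r j] x ∈ P.piece (i + 1)) ∧
    Filter.Tendsto (fun j => P.f^[l j] x) Filter.atTop (nhds (P.c i)) ∧
    Filter.Tendsto (fun j => P.f^[r j] x) Filter.atTop (nhds (P.c i))

/-- `c i ∈ Δ_lr`: `c i` is left-right recurrently visited by the orbit of some point
of `X̃`. -/
def inΔlr (i : ℕ) : Prop := ∃ x ∈ P.Xt, P.lrVisited x i

/-- The set `Δ_lr ⊆ Δ`. -/
def ΔlrSet : Set ℝ := {y | ∃ i, P.inΔlr i ∧ y = P.c i}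

/-- The relation `∼⁺` on `Δ_lr`: `c_i ∼⁺ c_j` iff `c_i = c_j` or
(`c_i ∈ Δ_lr(d_j^+)` and `c_j ∈ Δ_lr(d_i^+)`). -/
def simP (a b : ℝ) : Prop :=
  a = b ∨ ∃ i j, P.inΔlr i ∧ P.inΔlr j ∧ a = P.c i ∧ b = P.c j ∧
    P.lrVisited (P.dplus j) i ∧ P.lrVisited (P.dplus i) j

/-- The relation `≼⁺` (on representatives): `[c_i] ≼⁺ [c_j]` iff `[c_i] = [c_j]` or
`c_i ∈ Δ_lr(d_j^+)`. -/
def preP (a b : ℝ) : Prop :=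
  P.simP a b ∨ ∃ i j, P.inΔlr i ∧ P.inΔlr j ∧ a = P.c i ∧ b = P.c j ∧
    P.lrVisited (P.dplus j) i

/-- `[c i]` is a minimal class for the partial order `≼⁺`. -/
def MinimalClass (i : ℕ) : Prop :=
  P.inΔlr i ∧ ∀ j, P.inΔlr j → P.preP (P.c j) (P.c i) → P.simP (P.c j) (P.c i)

/-- `f` is injective on each contraction piece. -/
def InjPieces : Prop := ∀ i, 1 ≤ i → i ≤ P.N → Set.InjOn P.f (P.piece i)

/-- `f` is (strictly) increasing on each contraction piece. -/
def IncrPieces : Prop := ∀ i, 1 ≤ i → i ≤ P.N → StrictMonoOn P.f (P.piece i)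

/-- `x` is a periodic point of `f`. -/
def IsPeriodic (x : ℝ) : Prop := ∃ p : ℕ, 1 ≤ p ∧ P.f^[p] x = x

/-- `η` is the itinerary of `x`: `f^[n] x ∈ X_{η n}` for all `n`. -/
def IsItinerary (x : ℝ) (η : ℕ → ℕ) : Prop :=
  ∀ n, 1 ≤ η n ∧ η n ≤ P.N ∧ P.f^[n] x ∈ P.piece (η n)

end PCIM

/-- The word of length `n` of the sequence `η` starting at position `t`. -/
def wordAt (η : ℕ → ℕ) (t n : ℕ) : List ℕ := (List.range n).map fun m => η (t + m)

/-- The complexity function of the sequence `η`: the number of distinct words of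
length `n` occurring in `η`. -/
noncomputable def complexity (η : ℕ → ℕ) (n : ℕ) : ℕ := Set.ncard {w : List ℕ | ∃ t, w = wordAt η t n}

namespace PCIMAux

open PCIM

/-- On the closed piece containing a point of `X \ Δ`, `f` agrees with `fe i`. -/
lemma feq (P : PCIM) {i : ℕ} (h1 : 1 ≤ i) (h2 : i ≤ P.N) {y : ℝ}
    (hy : y ∈ P.X \ P.Δ) (hyi : y ∈ Set.Icc (P.c (i - 1)) (P.c i)) :
    P.fe i y = P.f y := by
  rcases eq_or_lt_of_le hyi.1 with hl | hl
  · have hi1 : i = 1 := by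
      by_contra h
      exact hy.2 ⟨i - 1, by omega, by omega, hl.symm⟩
    subst hi1
    rw [show (1 : ℕ) - 1 = 0 from rfl] at hl
    rw [← hl]
    exact P.hfe_left
  · rcases eq_or_lt_of_le hyi.2 with hr | hr
    · have hiN : i = P.N := by
        by_contra h
        exact hy.2 ⟨i, h1, by omega, hr⟩
      subst hiN
      rw [hr]
      exact P.hfe_right
    · exact P.hfe_eq i h1 h2 y ⟨hl, hr⟩

/-- Each point of `X \ Δ` has a neighborhood (within `X`) contained in a single
closed piece. -/
lemma exists_piece (P : PCIM) {q : ℝ} (hq : q ∈ P.X \ P.Δ) :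
    ∃ i, 1 ≤ i ∧ i ≤ P.N ∧ ∃ ε > 0, ∀ y ∈ P.X, |y - q| ≤ ε →
      y ∈ Set.Icc (P.c (i - 1)) (P.c i) := by
  classical
  obtain ⟨⟨hq0, hqN⟩, hqΔ⟩ := hq
  have hN2 := P.hN
  obtain ⟨i0, hspec, hleN, hgr⟩ :
      ∃ i0, P.c i0 ≤ q ∧ i0 ≤ P.N ∧ ∀ j, i0 < j → j ≤ P.N → ¬ P.c j ≤ q := by
    refine ⟨Nat.findGreatest (fun i => P.c i ≤ q) P.N,
      Nat.findGreatest_spec (P := fun i => P.c i ≤ q) (Nat.zero_le P.N) hq0, Nat.findGreatest_le P.N, ?_⟩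
    intro j hj1 hj2
    exact Nat.findGreatest_is_greatest (P := fun i => P.c i ≤ q) hj1 hj2
  by_cases hiN : i0 = P.N
  · have hq_eq : q = P.c P.N := le_antisymm hqN (hiN ▸ hspec)
    have hlt' : P.c (P.N - 1) < P.c P.N :=
      P.hc (Set.mem_Iic.mpr (by omega)) (Set.mem_Iic.mpr le_rfl) (by omega)
    refine ⟨P.N, by omega, le_rfl, P.c P.N - P.c (P.N - 1), by linarith, ?_⟩
    intro y hy habs
    rw [abs_le] at habs
    refine ⟨?_, hy.2⟩
    rw [hq_eq] at habs
    linarith [habs.1]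
  · have hlt : i0 < P.N := lt_of_le_of_ne hleN hiN
    have hnot : ¬ (P.c (i0 + 1) ≤ q) := hgr (i0 + 1) (by omega) (by omega)
    have hqlt : q < P.c (i0 + 1) := not_le.mp hnot
    by_cases hq0' : P.c i0 = q
    · have hi00 : i0 = 0 := by
        by_contra h
        exact hqΔ ⟨i0, by omega, hlt, hq0'.symm⟩
      rw [hi00] at hqlt
      refine ⟨1, le_rfl, by omega, P.c 1 - q, by linarith, ?_⟩
      intro y hy habs
      rw [abs_le] at habs
      refine ⟨?_, by linarith [habs.2]⟩
      rw [show (1 : ℕ) - 1 = 0 from rfl]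
      exact hy.1
    · have hq0lt : P.c i0 < q := lt_of_le_of_ne hspec hq0'
      refine ⟨i0 + 1, by omega, by omega,
        min (q - P.c i0) (P.c (i0 + 1) - q), lt_min (by linarith) (by linarith), ?_⟩
      intro y _ habs
      rw [abs_le] at habs
      have hm1 := min_le_left (q - P.c i0) (P.c (i0 + 1) - q)
      have hm2 := min_le_right (q - P.c i0) (P.c (i0 + 1) - q)
      refine ⟨?_, by linarith [habs.2]⟩
      rw [show i0 + 1 - 1 = i0 from rfl]
      linarith [habs.1]

/-- Local contraction around any point of `X \ Δ`. -/
lemma local_contract (P : PCIM) {q : ℝ} (hq : q ∈ P.X \ P.Δ) :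
    ∃ ε > 0, ∀ y ∈ P.X \ P.Δ, |y - q| ≤ ε →
      |P.f y - P.f q| ≤ P.lam * |y - q| := by
  obtain ⟨i, h1, h2, ε, hε, hball⟩ := exists_piece P hq
  refine ⟨ε, hε, fun y hy hd => ?_⟩
  have hyI := hball y hy.1 hd
  have hqI := hball q hq.1 (by simpa using le_of_lt hε)
  rw [← feq P h1 h2 hy hyI, ← feq P h1 h2 hq hqI]
  exact P.hfe_lip i h1 h2 y hyI q hqI

end PCIMAux

open PCIMAux

/-- If `D ⊆ X̃`, `x ∈ X̃`, `p ∈ X̃` is a periodic point and `p ∈ ω(x)`, then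
`ω(x) = O(p)`. -/
theorem stmt12 (P : PCIM) (hD : P.D ⊆ P.Xt) (x : ℝ) (hx : x ∈ P.Xt)
    (p : ℝ) (hp : p ∈ P.Xt) (hper : P.IsPeriodic p) (hpω : p ∈ P.omega x) :
    P.omega x = P.orbit p := by
  classical
  obtain ⟨k, hk1, hkp⟩ := hper
  have hk0 : 0 < k := hk1
  have hlam0 : 0 < P.lam := P.hlam.1
  have hlam1 : P.lam < 1 := P.hlam.2
  -- periodicity modulo k
  have hmod : ∀ m, P.f^[m] p = P.f^[m % k] p := by
    intro m
    conv_lhs => rw [← Nat.mod_add_div m k]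
    rw [Function.iterate_add_apply]
    congr 1
    have hjk : ∀ j : ℕ, P.f^[k * j] p = p := by
      intro j
      induction j with
      | zero => simp
      | succ j ih =>
        rw [Nat.mul_succ, Function.iterate_add_apply, hkp, ih]
    exact hjk (m / k)
  -- choose local contraction radii along the orbit of p
  choose E hEpos hE using fun m : ℕ => local_contract P (hp m)
  have hrne : (Finset.range k).Nonempty := Finset.nonempty_range_iff.mpr (by omega)
  set εv := (Finset.range k).inf' hrne E with hεvdef
  have hεpos : 0 < εv := by
    rw [Finset.lt_inf'_iff]
    intro i _
    exact hEpos i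
  have hεle : ∀ m : ℕ, εv ≤ E (m % k) := by
    intro m
    exact Finset.inf'_le E (Finset.mem_range.mpr (Nat.mod_lt m hk0))
  -- key shadowing estimate
  have key0 : ∀ n : ℕ, |P.f^[n] x - p| ≤ εv →
      ∀ m : ℕ, |P.f^[n + m] x - P.f^[m] p| ≤ P.lam ^ m * εv := by
    intro n hn m
    induction m with
    | zero => simpa using hn
    | succ m ih =>
      have hmem : P.f^[n + m] x ∈ P.X \ P.Δ := hx (n + m)
      have hmk : P.f^[m] p = P.f^[m % k] p := hmod m
      have hle1 : |P.f^[n + m] x - P.f^[m] p| ≤ E (m % k) := by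
        calc |P.f^[n + m] x - P.f^[m] p| ≤ P.lam ^ m * εv := ih
          _ ≤ εv := mul_le_of_le_one_left (le_of_lt hεpos)
              (pow_le_one₀ (le_of_lt hlam0) (le_of_lt hlam1))
          _ ≤ E (m % k) := hεle m
      have hstep := hE (m % k) (P.f^[n + m] x) hmem (by rw [← hmk]; exact hle1)
      rw [← hmk] at hstep
      calc |P.f^[n + (m + 1)] x - P.f^[m + 1] p|
          = |P.f (P.f^[n + m] x) - P.f (P.f^[m] p)| := by
            rw [show n + (m + 1) = (n + m) + 1 from rfl,
              Function.iterate_succ_apply', Function.iterate_succ_apply']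
        _ ≤ P.lam * |P.f^[n + m] x - P.f^[m] p| := hstep
        _ ≤ P.lam * (P.lam ^ m * εv) :=
            mul_le_mul_of_nonneg_left ih (le_of_lt hlam0)
        _ = P.lam ^ (m + 1) * εv := by ring
  -- find a time when the orbit of x is ε-close to p
  obtain ⟨φ, hφ, hφt⟩ := hpω
  rw [Metric.tendsto_atTop] at hφt
  obtain ⟨j0, hj0⟩ := hφt εv hεpos
  set n := φ j0 with hndef
  have hn : |P.f^[n] x - p| ≤ εv := by
    have := hj0 j0 le_rfl
    rw [Real.dist_eq] at this
    exact le_of_lt this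
  have key := key0 n hn
  -- the orbit of p is finite, hence closed
  have hfin : (P.orbit p).Finite := by
    apply Set.Finite.subset ((Set.finite_Iio k).image fun i => P.f^[i] p)
    rintro z ⟨m, rfl⟩
    exact ⟨m % k, Nat.mod_lt m hk0, (hmod m).symm⟩
  have hpow0 : Filter.Tendsto (fun t : ℕ => P.lam ^ t * εv) Filter.atTop (nhds 0) := by
    simpa using
      (tendsto_pow_atTop_nhds_zero_of_lt_one (le_of_lt hlam0) hlam1).mul_const εv
  ext y
  constructor
  · rintro ⟨ψ, hψ, hψt⟩
    set g : ℕ → ℝ := fun j => P.f^[ψ j - n] p with hgdef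
    have hgS : ∀ j, g j ∈ P.orbit p := fun j => ⟨ψ j - n, rfl⟩
    have hdist : Filter.Tendsto (fun j => dist (g j) y) Filter.atTop (nhds 0) := by
      apply squeeze_zero' (Filter.Eventually.of_forall fun j => dist_nonneg)
        (g := fun j => P.lam ^ (ψ j - n) * εv + dist (P.f^[ψ j] x) y)
      · filter_upwards [Filter.eventually_ge_atTop n] with j hj
        have hjn : n ≤ ψ j := le_trans hj hψ.le_apply
        have hrw : P.f^[ψ j] x = P.f^[n + (ψ j - n)] x := by
          rw [Nat.add_sub_cancel' hjn]
        have h1 : dist (g j) (P.f^[ψ j] x) ≤ P.lam ^ (ψ j - n) * εv := by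
          rw [hrw, Real.dist_eq, abs_sub_comm]
          exact key (ψ j - n)
        calc dist (g j) y ≤ dist (g j) (P.f^[ψ j] x) + dist (P.f^[ψ j] x) y :=
              dist_triangle _ _ _
          _ ≤ P.lam ^ (ψ j - n) * εv + dist (P.f^[ψ j] x) y := by linarith
      · have h1 : Filter.Tendsto (fun j => P.lam ^ (ψ j - n) * εv)
            Filter.atTop (nhds 0) :=
          hpow0.comp ((Filter.tendsto_sub_atTop_nat n).comp hψ.tendsto_atTop)
        have h2 : Filter.Tendsto (fun j => dist (P.f^[ψ j] x) y)
            Filter.atTop (nhds 0) := tendsto_iff_dist_tendsto_zero.mp hψt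
        simpa using h1.add h2
    have hgy : Filter.Tendsto g Filter.atTop (nhds y) :=
      tendsto_iff_dist_tendsto_zero.mpr hdist
    have hycl : y ∈ closure (P.orbit p) :=
      mem_closure_of_tendsto hgy (Filter.Eventually.of_forall hgS)
    rwa [hfin.isClosed.closure_eq] at hycl
  · rintro ⟨m, rfl⟩
    refine ⟨fun j => n + (m + j * k), ?_, ?_⟩
    · intro a b hab
      have : a * k < b * k := Nat.mul_lt_mul_of_lt_of_le hab le_rfl hk0
      show n + (m + a * k) < n + (m + b * k)
      omega
    · rw [tendsto_iff_dist_tendsto_zero]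
      apply squeeze_zero (fun j => dist_nonneg)
        (g := fun j => P.lam ^ (m + j * k) * εv)
      · intro j
        have hper' : P.f^[m + j * k] p = P.f^[m] p := by
          rw [Function.iterate_add_apply]
          congr 1
          rw [hmod (j * k), Nat.mul_mod_left]
          rfl
        calc dist (P.f^[n + (m + j * k)] x) (P.f^[m] p)
            = |P.f^[n + (m + j * k)] x - P.f^[m + j * k] p| := by
              rw [Real.dist_eq, hper']
          _ ≤ P.lam ^ (m + j * k) * εv := key (m + j * k)
      · apply hpow0.comp
        apply Filter.tendsto_atTop_mono (f := fun j : ℕ => j)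
          (fun j => by nlinarith [Nat.le_mul_of_pos_right j hk0]) Filter.tendsto_id
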